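/- Let S be a convex set in ℝⁿ with 0 in its interior, let w ∈ ℝⁿ have nonnegative components, fix 0 < p ≤ 1, and define the weighted distance D(x) = Σᵢ wᵢ|xᵢ|ᵖ. If the minimum of D over the boundary ∂S is attained with value d > 0, then there exists a boundary point with exactly one nonzero component achieving weighted distance d. -/

import Mathlib

/-- Weighted version: for weights wᵢ ≥ 0 and 0 < p ≤ 1, the minimum of
D(x) = Σᵢ wᵢ|xᵢ|ᵖ over the boundary of a convex set with 0 interior is achieved
by a point with exactly one nonzero component. -/
theorem min_weighted_projection_unidimensional {n : ℕ} (S : Set (Fin n → ℝ))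
    (hS : Convex ℝ S) (h0 : (0 : Fin n → ℝ) ∈ interior S)
    (w : Fin n → ℝ) (hw : ∀ i, 0 ≤ w i)
    (p : ℝ) (hp : 0 < p) (hp1 : p ≤ 1)
    (d : ℝ) (hd : 0 < d)
    (x : Fin n → ℝ) (hx : x ∈ frontier S) (hxd : ∑ i, w i * |x i| ^ p = d)
    (hmin : ∀ y ∈ frontier S, d ≤ ∑ i, w i * |y i| ^ p) :
    ∃ z ∈ frontier S, (∃! i, z i ≠ 0) ∧ ∑ i, w i * |z i| ^ p = d := by
  classical
  have hp' : p ≠ 0 := ne_of_gt hp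
  have hterm : ∀ (y : Fin n → ℝ) (i : Fin n), 0 ≤ w i * |y i| ^ p := fun y i =>
    mul_nonneg (hw i) (Real.rpow_nonneg (abs_nonneg _) p)
  have hDnonneg : ∀ y : Fin n → ℝ, 0 ≤ ∑ i, w i * |y i| ^ p := fun y =>
    Finset.sum_nonneg fun i _ => hterm y i
  -- scaling identity
  have hscale : ∀ u : ℝ, 0 ≤ u → ∀ y : Fin n → ℝ,
      ∑ i, w i * |(u • y) i| ^ p = u ^ p * ∑ i, w i * |y i| ^ p := by
    intro u hu y
    simp only [Pi.smul_apply, smul_eq_mul, Finset.mul_sum]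
    refine Finset.sum_congr rfl fun i _ => ?_
    rw [abs_mul, abs_of_nonneg hu, Real.mul_rpow hu (abs_nonneg _)]
    ring
  -- points with small D are in the interior
  have hint : ∀ y : Fin n → ℝ, (∑ i, w i * |y i| ^ p) < d → y ∈ interior S := by
    intro y hy
    have hcont : Continuous fun t : ℝ => t • y := continuous_id.smul continuous_const
    have hyc : y ∈ closure S := by
      by_contra hyc
      set T : Set ℝ := Set.Icc (0:ℝ) 1 ∩ (fun t : ℝ => t • y) ⁻¹' closure S with hT
      have hTclosed : IsClosed T := isClosed_Icc.inter (isClosed_closure.preimage hcont)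
      have h0T : (0:ℝ) ∈ T := by
        refine ⟨⟨le_refl 0, zero_le_one⟩, ?_⟩
        simp only [Set.mem_preimage, zero_smul]
        exact subset_closure (interior_subset h0)
      have hTne : T.Nonempty := ⟨0, h0T⟩
      have hTbdd : BddAbove T := ⟨1, fun t ht => ht.1.2⟩
      set c := sSup T with hc
      have hcT : c ∈ T := hTclosed.csSup_mem hTne hTbdd
      have hc1 : c ≤ 1 := hcT.1.2
      have hc0 : 0 ≤ c := hcT.1.1
      have hclt1 : c < 1 := by
        rcases lt_or_eq_of_le hc1 with h | h
        · exact h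
        · exfalso
          apply hyc
          have h2 := hcT.2
          rw [Set.mem_preimage, h, one_smul] at h2
          exact h2
      have hcfr : c • y ∈ frontier S := by
        refine ⟨hcT.2, ?_⟩
        intro hci
        have hnhds : (fun t : ℝ => t • y) ⁻¹' interior S ∈ nhds c :=
          (isOpen_interior.preimage hcont).mem_nhds hci
        obtain ⟨ε, hε, hball⟩ := Metric.mem_nhds_iff.mp hnhds
        set c' := min 1 (c + ε/2) with hc'
        have hcc' : c < c' := lt_min hclt1 (by linarith)
        have hc'T : c' ∈ T := by
          refine ⟨⟨by positivity, min_le_left _ _⟩, ?_⟩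
          have hball' : c' ∈ Metric.ball c ε := by
            rw [Metric.mem_ball, Real.dist_eq, abs_sub_lt_iff]
            constructor
            · have : c' ≤ c + ε/2 := min_le_right _ _
              linarith
            · linarith
          exact subset_closure (interior_subset (hball hball'))
        have := le_csSup hTbdd hc'T
        linarith
      have hmin' := hmin _ hcfr
      have hDc : ∑ i, w i * |(c • y) i| ^ p ≤ ∑ i, w i * |y i| ^ p := by
        rw [hscale c hc0]
        calc c ^ p * ∑ i, w i * |y i| ^ p ≤ 1 * ∑ i, w i * |y i| ^ p :=
              mul_le_mul_of_nonneg_right (Real.rpow_le_one hc0 hc1 (le_of_lt hp)) (hDnonneg y)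
          _ = ∑ i, w i * |y i| ^ p := one_mul _
      linarith
    by_contra hyi
    have hyfr : y ∈ frontier S := ⟨hyc, hyi⟩
    have := hmin y hyfr
    linarith
  -- points with D = d are in the closure
  have hmemclos : ∀ z : Fin n → ℝ, (∑ i, w i * |z i| ^ p) = d → z ∈ closure S := by
    intro z hz
    have hmem : ∀ u : ℝ, 0 ≤ u → u < 1 → u • z ∈ S := by
      intro u hu hu1
      refine interior_subset (hint _ ?_)
      rw [hscale u hu, hz]
      calc u ^ p * d < 1 * d := mul_lt_mul_of_pos_right (Real.rpow_lt_one hu hu1 hp) hd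
        _ = d := one_mul d
    rw [mem_closure_iff_seq_limit]
    refine ⟨fun k : ℕ => (1 - ((k:ℝ)+1)⁻¹) • z, fun k => hmem _ ?_ ?_, ?_⟩
    · have h1 : ((k:ℝ)+1)⁻¹ ≤ 1 := inv_le_one_of_one_le₀ (by
        have : (0:ℝ) ≤ (k:ℝ) := Nat.cast_nonneg k
        linarith)
      linarith
    · have h2 : 0 < ((k:ℝ)+1)⁻¹ := by positivity
      linarith
    · have h4 : Filter.Tendsto (fun k : ℕ => ((k:ℝ)+1)⁻¹) Filter.atTop (nhds 0) := by
        simpa [one_div] using tendsto_one_div_add_atTop_nhds_zero_nat (𝕜 := ℝ)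
      have h3 : Filter.Tendsto (fun k : ℕ => 1 - ((k:ℝ)+1)⁻¹) Filter.atTop (nhds 1) := by
        simpa using (tendsto_const_nhds.sub h4)
      have := h3.smul_const z
      rwa [one_smul] at this
  -- the positive-weight support of x
  set I : Finset (Fin n) := Finset.univ.filter (fun i => 0 < w i * |x i| ^ p) with hIdef
  have hIpos : ∀ i ∈ I, 0 < w i * |x i| ^ p := by
    intro i hi
    rw [hIdef, Finset.mem_filter] at hi
    exact hi.2
  have hIsum : ∑ i ∈ I, w i * |x i| ^ p = d := by
    rw [hIdef, Finset.sum_filter_of_ne (fun i _ hne => lt_of_le_of_ne (hterm x i) (Ne.symm hne))]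
    exact hxd
  have hIne : I.Nonempty := by
    by_contra h
    rw [Finset.not_nonempty_iff_eq_empty] at h
    rw [h, Finset.sum_empty] at hIsum
    linarith
  have hImem : ∀ i ∈ I, 0 < w i ∧ x i ≠ 0 := by
    intro i hi
    have hpos := hIpos i hi
    have h1 : 0 ≤ |x i| ^ p := Real.rpow_nonneg (abs_nonneg _) p
    constructor
    · by_contra h
      push_neg at h
      nlinarith
    · intro h
      rw [h, abs_zero, Real.zero_rpow hp', mul_zero] at hpos
      exact lt_irrefl 0 hpos
  -- auxiliary definitions
  set cc : Fin n → ℝ := fun i => (d / w i) ^ p⁻¹ with hccdef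
  set sv : Fin n → ℝ := fun i => (x i / |x i|) * cc i with hsvdef
  set lam : Fin n → ℝ := fun i => |x i| / cc i with hlamdef
  set Z : Fin n → (Fin n → ℝ) := fun i j => if j = i then sv i else 0 with hZdef
  have hccpos : ∀ i ∈ I, 0 < cc i := by
    intro i hi
    simp only [hccdef]
    exact Real.rpow_pos_of_pos (div_pos hd (hImem i hi).1) _
  have hlam_pos : ∀ i ∈ I, 0 < lam i := by
    intro i hi
    simp only [hlamdef]
    exact div_pos (abs_pos.mpr (hImem i hi).2) (hccpos i hi)
  have hlam_sv : ∀ i ∈ I, lam i * sv i = x i := by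
    intro i hi
    obtain ⟨hwi, hxi⟩ := hImem i hi
    have h1 : cc i ≠ 0 := ne_of_gt (hccpos i hi)
    have h2 : |x i| ≠ 0 := abs_ne_zero.mpr hxi
    simp only [hlamdef, hsvdef]
    field_simp
  have hlam_eq : ∀ i ∈ I, lam i = ((w i * |x i| ^ p) / d) ^ p⁻¹ := by
    intro i hi
    obtain ⟨hwi, hxi⟩ := hImem i hi
    have hwne : w i ≠ 0 := ne_of_gt hwi
    have hdne : d ≠ 0 := ne_of_gt hd
    simp only [hlamdef, hccdef]
    rw [show w i * |x i| ^ p / d = |x i| ^ p / (d / w i) by field_simp]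
    rw [Real.div_rpow (Real.rpow_nonneg (abs_nonneg _) _) (le_of_lt (div_pos hd hwi)),
      Real.rpow_rpow_inv (abs_nonneg _) hp']
  have hlam_le : ∀ i ∈ I, lam i ≤ (w i * |x i| ^ p) / d := by
    intro i hi
    rw [hlam_eq i hi]
    have hb0 : 0 < w i * |x i| ^ p / d := div_pos (hIpos i hi) hd
    have hb1 : w i * |x i| ^ p / d ≤ 1 := by
      rw [div_le_one hd, ← hxd]
      exact Finset.single_le_sum (fun j _ => hterm x j) (Finset.mem_univ i)
    have h1p : 1 ≤ p⁻¹ := (one_le_inv₀ hp).2 hp1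
    calc (w i * |x i| ^ p / d) ^ p⁻¹ ≤ (w i * |x i| ^ p / d) ^ (1:ℝ) :=
          Real.rpow_le_rpow_of_exponent_ge hb0 hb1 h1p
      _ = w i * |x i| ^ p / d := Real.rpow_one _
  set t := ∑ i ∈ I, lam i with htdef
  have ht_pos : 0 < t := Finset.sum_pos hlam_pos hIne
  have ht_le : t ≤ 1 := by
    rw [htdef]
    calc ∑ i ∈ I, lam i ≤ ∑ i ∈ I, (w i * |x i| ^ p) / d := Finset.sum_le_sum hlam_le
      _ = (∑ i ∈ I, w i * |x i| ^ p) / d := by rw [Finset.sum_div]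
      _ = 1 := by rw [hIsum, div_self (ne_of_gt hd)]
  -- the deformation family
  set P : ℝ → (Fin n → ℝ) := fun c j => if j ∈ I then x j else c * x j with hPdef
  have hDP : ∀ c : ℝ, ∑ j, w j * |P c j| ^ p = d := by
    intro c
    have hterm_eq : ∀ j, w j * |P c j| ^ p = if j ∈ I then w j * |x j| ^ p else 0 := by
      intro j
      by_cases hjI : j ∈ I
      · simp only [hPdef, if_pos hjI]
      · simp only [hPdef, if_neg hjI]
        have h0' : w j * |x j| ^ p = 0 := by
          have h2 : ¬ 0 < w j * |x j| ^ p := by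
            intro h2
            exact hjI (by rw [hIdef, Finset.mem_filter]; exact ⟨Finset.mem_univ j, h2⟩)
          exact le_antisymm (not_lt.mp h2) (hterm x j)
        rw [abs_mul, Real.mul_rpow (abs_nonneg c) (abs_nonneg (x j))]
        calc w j * (|c| ^ p * |x j| ^ p) = |c| ^ p * (w j * |x j| ^ p) := by ring
          _ = 0 := by rw [h0', mul_zero]
    calc ∑ j, w j * |P c j| ^ p = ∑ j, if j ∈ I then w j * |x j| ^ p else 0 :=
          Finset.sum_congr rfl fun j _ => hterm_eq j
      _ = ∑ j ∈ I, w j * |x j| ^ p := by rw [Finset.sum_ite_mem, Finset.univ_inter]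
      _ = d := hIsum
  -- key step : one of the axis points is not interior
  have key : ∃ i ∈ I, Z i ∉ interior S := by
    by_contra hall
    push_neg at hall
    have hrep : t⁻¹ • P 0 = ∑ i ∈ I, (lam i / t) • Z i := by
      funext j
      simp only [Finset.sum_apply, Pi.smul_apply, smul_eq_mul, hPdef, hZdef, mul_ite, mul_zero]
      rw [Finset.sum_ite_eq]
      by_cases hj : j ∈ I
      · rw [if_pos hj, if_pos hj, div_mul_eq_mul_div, hlam_sv j hj]
        rw [div_eq_inv_mul]
      · rw [if_neg hj, if_neg hj]
        simp
    have hsum1 : ∑ i ∈ I, lam i / t = 1 := by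
      rw [← Finset.sum_div, ← htdef, div_self (ne_of_gt ht_pos)]
    have hv' : ∑ i ∈ I, (lam i / t) • Z i ∈ interior S :=
      hS.interior.sum_mem (fun i hi => div_nonneg (hlam_pos i hi).le ht_pos.le) hsum1
        (fun i hi => hall i hi)
    rw [← hrep] at hv'
    have hP0eq : P 0 = t • (t⁻¹ • P 0) + (1 - t) • (0 : Fin n → ℝ) := by
      rw [smul_smul, mul_inv_cancel₀ (ne_of_gt ht_pos), one_smul, smul_zero, add_zero]
    have hv : P 0 ∈ interior S := by
      rw [hP0eq]
      exact hS.interior hv' h0 ht_pos.le (by linarith) (by ring)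
    have hP2 : P 2 ∈ closure S := hmemclos (P 2) (hDP 2)
    have hxP : x = (1/2 : ℝ) • P 0 + (1/2 : ℝ) • P 2 := by
      funext j
      simp only [Pi.add_apply, Pi.smul_apply, smul_eq_mul, hPdef]
      by_cases hj : j ∈ I
      · rw [if_pos hj, if_pos hj]; ring
      · rw [if_neg hj, if_neg hj]; ring
    have hxint : x ∈ interior S := by
      rw [hxP]
      exact hS.combo_interior_closure_mem_interior hv hP2 (by norm_num) (by norm_num)
        (by norm_num)
    exact hx.2 hxint
  obtain ⟨i, hiI, hzi⟩ := key
  obtain ⟨hwi, hxi⟩ := hImem i hiI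
  have habs : |sv i| = cc i := by
    simp only [hsvdef, hccdef]
    rw [abs_mul, abs_div, abs_abs, div_self (abs_ne_zero.mpr hxi), one_mul,
      abs_of_nonneg (Real.rpow_nonneg (div_pos hd hwi).le _)]
  have hDZ : ∑ j, w j * |Z i j| ^ p = d := by
    rw [Finset.sum_eq_single i]
    · simp only [hZdef, if_pos rfl]
      rw [habs]
      simp only [hccdef]
      rw [Real.rpow_inv_rpow (div_pos hd hwi).le hp', mul_comm,
        div_mul_cancel₀ d (ne_of_gt hwi)]
    · intro j _ hji
      simp only [hZdef, if_neg hji]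
      rw [abs_zero, Real.zero_rpow hp', mul_zero]
    · intro h
      exact absurd (Finset.mem_univ i) h
  have hsvne : sv i ≠ 0 := by
    simp only [hsvdef]
    exact mul_ne_zero (div_ne_zero hxi (abs_ne_zero.mpr hxi))
      (ne_of_gt (Real.rpow_pos_of_pos (div_pos hd hwi) _))
  refine ⟨Z i, ⟨hmemclos (Z i) hDZ, hzi⟩, ⟨i, ?_, ?_⟩, hDZ⟩
  · simp only [hZdef, if_pos rfl]
    exact hsvne
  · intro j hj
    by_contra hne
    simp only [hZdef, if_neg hne] at hj
    exact hj rfl
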